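/- Let $\alpha = (-\frac{1}{2}, -\frac{1}{4}, -\frac{1}{8}, \ldots)$, i.e. $\alpha(i) = -2^{-i}$, and $W_\alpha = \{x \in c : \lim_i x(i) = \sum_i \alpha(i)x(i)\}$. Then there is no infinite set $C \subset \{\pm e_n^* : n \in \mathbb{N}\}$ such that the $\sigma(\ell_1, W_\alpha)$-closed convex hull of $C$ is contained in $S_{\ell_1}$, while $\alpha$ itself is a $\sigma(\ell_1, W_\alpha)$-limit point of $\{e_n^*\}$ with $\|\alpha\|_1 = 1$. -/

import Mathlib

open Filter Topology ENNReal NormedSpace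

noncomputable section

instance : Fact ((1:ℝ≥0∞) ≤ 1) := ⟨le_rfl⟩

/-- The space `ℓ₁` of absolutely summable real sequences. -/
abbrev ell1 : Type := lp (fun _ : ℕ => ℝ) 1

/-- The standard unit vector basis of `ℓ₁`. -/
def basisv (i : ℕ) : ell1 := lp.single 1 i (1:ℝ)

/-- The weak-star topology `σ(ℓ₁, X)` on `ℓ₁` induced by a predual `X` via an
isometric identification `e` of the dual of `X` with `ℓ₁`. -/
def wstar (X : Type*) [NormedAddCommGroup X] [NormedSpace ℝ X]
    (e : StrongDual ℝ X ≃ₗᵢ[ℝ] ell1) : TopologicalSpace ell1 :=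
  TopologicalSpace.induced (fun y => StrongDual.toWeakDual (e.symm y)) inferInstance

/-- The weak-star topology `σ(Y*, Y)` on the dual of a normed space `Y`. -/
def wsDual (Y : Type*) [NormedAddCommGroup Y] [NormedSpace ℝ Y] :
    TopologicalSpace (StrongDual ℝ Y) :=
  TopologicalSpace.induced (fun φ : StrongDual ℝ Y => StrongDual.toWeakDual φ)
    inferInstance

lemma aux19 : Memℓp (fun i : ℕ => -((1 / 2 : ℝ) ^ (i + 1))) 1 := by
  apply memℓp_gen
  have h : Summable fun i : ℕ => (1 / 2 : ℝ) ^ (i + 1) := by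
    have := (summable_geometric_of_lt_one (r := (1/2:ℝ)) (by norm_num)
      (by norm_num)).mul_right (1/2)
    refine this.congr fun i => ?_
    rw [pow_succ]
  refine h.congr fun i => ?_
  rw [ENNReal.toReal_one, Real.rpow_one]
  simp [Real.norm_eq_abs, abs_of_nonneg, pow_nonneg]

/-- The element `α = (-1/2, -1/4, -1/8, ...)` of `ℓ₁`. -/
def alpha19 : ell1 := ⟨fun i => -((1 / 2 : ℝ) ^ (i + 1)), aux19⟩

lemma basisv_apply (n i : ℕ) : (basisv n : ℕ → ℝ) i = if i = n then 1 else 0 := by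
  rw [basisv, lp.single_apply]
  split_ifs with h
  · subst h; simp
  · simp [h]

lemma summable_half : Summable fun i : ℕ => (1 / 2 : ℝ) ^ (i + 1) := by
  have := (summable_geometric_of_lt_one (r := (1/2:ℝ)) (by norm_num)
    (by norm_num)).mul_right (1/2)
  refine this.congr fun i => ?_
  rw [pow_succ]

lemma tsum_half : ∑' i : ℕ, (1 / 2 : ℝ) ^ (i + 1) = 1 := by
  have h : ∀ i : ℕ, (1/2:ℝ) ^ (i+1) = (1/2:ℝ)^i * (1/2) := fun i => pow_succ _ _
  rw [tsum_congr h, tsum_mul_right, tsum_geometric_of_lt_one (by norm_num) (by norm_num)]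
  norm_num

lemma norm_alpha : ‖alpha19‖ = 1 := by
  rw [lp.norm_eq_tsum_rpow (by norm_num) alpha19]
  simp only [ENNReal.toReal_one, one_div_one, Real.rpow_one]
  rw [show (fun i => ‖(alpha19 : ℕ → ℝ) i‖) = fun i : ℕ => (1/2:ℝ)^(i+1) from
    funext fun i => by
      show ‖-((1 / 2 : ℝ) ^ (i + 1))‖ = _
      rw [norm_neg, Real.norm_eq_abs, abs_of_nonneg (by positivity)]]
  exact tsum_half

lemma summable_pair (y : ell1) {w : ℕ → ℝ} (hw : ∃ L, Tendsto w atTop (𝓝 L)) :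
    Summable (fun i => (y : ℕ → ℝ) i * w i) := by
  obtain ⟨L, hL⟩ := hw
  obtain ⟨M, hM⟩ := hL.abs.bddAbove_range
  have hy : Summable (fun i => ‖(y : ℕ → ℝ) i‖) := by
    have := (lp.memℓp y).summable (p := 1) (by norm_num)
    simpa using this
  refine Summable.of_norm_bounded (hy.mul_right M) ?_
  intro i
  rw [norm_mul]
  exact mul_le_mul_of_nonneg_left (hM (Set.mem_range_self i)) (norm_nonneg _)

lemma summable_basis_pair (n : ℕ) (w : ℕ → ℝ) :
    Summable (fun i => (basisv n : ℕ → ℝ) i * w i) := by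
  apply summable_of_ne_finset_zero (s := {n})
  intro i hi
  rw [basisv_apply, if_neg (by simpa using hi), zero_mul]

lemma pair_basis (n : ℕ) (w : ℕ → ℝ) : ∑' i, (basisv n : ℕ → ℝ) i * w i = w n := by
  rw [tsum_congr (fun i => show (basisv n : ℕ → ℝ) i * w i = if i = n then w n else 0 by
    rw [basisv_apply]; split_ifs with h <;> simp [h])]
  exact tsum_ite_eq n (fun _ => w n)

lemma norm_basis_add_alpha (m : ℕ) : ‖basisv m + alpha19‖ = 2 - (1/2:ℝ)^m := by
  rw [lp.norm_eq_tsum_rpow (by norm_num) _]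
  simp only [ENNReal.toReal_one, one_div_one, Real.rpow_one]
  have hcoe : ∀ i, ‖(↑(basisv m + alpha19) : ℕ → ℝ) i‖
      = (1/2:ℝ)^(i+1) + (if i = m then 1 - (1/2:ℝ)^m else 0) := by
    intro i
    rw [lp.coeFn_add, Pi.add_apply, basisv_apply]
    show ‖_ + -((1 / 2 : ℝ) ^ (i + 1))‖ = _
    split_ifs with h
    · subst h
      have h1 : (1/2:ℝ)^(i+1) ≤ 1 := pow_le_one₀ (by norm_num) (by norm_num)
      rw [Real.norm_eq_abs, abs_of_nonneg (by linarith)]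
      rw [pow_succ]
      ring
    · rw [zero_add, norm_neg, Real.norm_eq_abs, abs_of_nonneg (by positivity), add_zero]
  rw [tsum_congr hcoe, Summable.tsum_add summable_half
    (summable_of_ne_finset_zero (s := {m}) (fun i hi => if_neg (by simpa using hi))),
    tsum_half, tsum_ite_eq m (fun _ => 1 - (1/2:ℝ)^m)]
  ring

lemma pair_smul_add (s : ℝ) (y₁ y₂ : ell1) (w : ℕ → ℝ)
    (h1 : Summable fun i => (y₁ : ℕ → ℝ) i * w i)
    (h2 : Summable fun i => (y₂ : ℕ → ℝ) i * w i) :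
    ∑' i, ((s • (y₁ + y₂) : ell1) : ℕ → ℝ) i * w i
      = s * ((∑' i, (y₁ : ℕ → ℝ) i * w i) + ∑' i, (y₂ : ℕ → ℝ) i * w i) := by
  have hcoe : ∀ i, ((s • (y₁ + y₂) : ell1) : ℕ → ℝ) i * w i
      = s * ((y₁ : ℕ → ℝ) i * w i + (y₂ : ℕ → ℝ) i * w i) := by
    intro i
    rw [lp.coeFn_smul, Pi.smul_apply, lp.coeFn_add, Pi.add_apply, smul_eq_mul]
    ring
  rw [tsum_congr hcoe, tsum_mul_left, Summable.tsum_add h1 h2]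

lemma mem_closure' {X : Type*} (t : TopologicalSpace X) {α : Type*} {f : α → X}
    {b : Filter α} [b.NeBot] {x : X} {s : Set X}
    (hf : Tendsto f b (@nhds _ t x)) (h : ∀ᶠ a in b, f a ∈ s) :
    x ∈ @closure _ t s := by
  letI := t
  exact mem_closure_of_tendsto hf h

theorem stmt19 :
    let Wmem : (ℕ → ℝ) → Prop := fun x =>
      (∃ L : ℝ, Tendsto x atTop (𝓝 L)) ∧
        Tendsto x atTop (𝓝 (∑' i, (-((1 / 2 : ℝ) ^ (i + 1))) * x i))
    let ws : TopologicalSpace ell1 := TopologicalSpace.induced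
      (fun y : ell1 => fun w : {x : ℕ → ℝ // Wmem x} => ∑' i, y i * w.1 i) inferInstance
    let E : Set ell1 := {z | ∃ i, z = basisv i ∨ z = -basisv i}
    (¬ ∃ C : Set ell1, C.Infinite ∧ C ⊆ E ∧
        @closure _ ws (convexHull ℝ C) ⊆ {y : ell1 | ‖y‖ = 1}) ∧
      alpha19 ∈ @closure _ ws ((Set.range basisv) \ {alpha19}) ∧ ‖alpha19‖ = 1 := by
  intro Wmem ws E
  have key : ∀ {ι : Type} (F : Filter ι) (f : ι → ell1) (a : ell1),
      (∀ w : {x : ℕ → ℝ // Wmem x}, Tendsto (fun n => ∑' i, (f n : ℕ → ℝ) i * w.1 i) F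
        (𝓝 (∑' i, (a : ℕ → ℝ) i * w.1 i))) →
      Tendsto f F (@nhds _ ws a) := by
    intro ι F f a h
    rw [show ws = TopologicalSpace.induced
      (fun y : ell1 => fun w : {x : ℕ → ℝ // Wmem x} => ∑' i, y i * w.1 i) inferInstance
      from rfl, nhds_induced, tendsto_comap_iff]
    exact tendsto_pi_nhds.2 h
  have hval : ∀ w : {x : ℕ → ℝ // Wmem x},
      (∑' i, (alpha19 : ℕ → ℝ) i * w.1 i) = ∑' i, -((1/2:ℝ)^(i+1)) * w.1 i := fun w => rfl
  refine ⟨?_, ?_, norm_alpha⟩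
  · rintro ⟨C, hCinf, hCE, hCsph⟩
    have hor : {n : ℕ | basisv n ∈ C}.Infinite ∨ {n : ℕ | -basisv n ∈ C}.Infinite := by
      by_contra hcon
      push_neg at hcon
      refine hCinf (((hcon.1.image basisv).union (hcon.2.image (fun n => -basisv n))).subset ?_)
      intro c hc
      obtain ⟨i, hi | hi⟩ := hCE hc
      · exact Or.inl ⟨i, by rwa [Set.mem_setOf_eq, ← hi], hi.symm⟩
      · exact Or.inr ⟨i, by rwa [Set.mem_setOf_eq, ← hi], hi.symm⟩
    obtain ⟨s, hs, S, hSinf, hSC⟩ : ∃ s : ℝ, |s| = 1 ∧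
        ∃ S : Set ℕ, S.Infinite ∧ ∀ n ∈ S, s • basisv n ∈ C := by
      rcases hor with h | h
      · exact ⟨1, by norm_num, _, h, fun n hn => by simpa [one_smul] using hn⟩
      · exact ⟨-1, by norm_num, _, h, fun n hn => by simpa using hn⟩
    obtain ⟨m, hm⟩ := hSinf.nonempty
    haveI hF : (atTop ⊓ 𝓟 S).NeBot := by
      have : ∃ᶠ n in atTop, n ∈ S := Nat.frequently_atTop_iff_infinite.2 hSinf
      exact frequently_iff_neBot.1 this
    have hz : ((s/2) • (basisv m + alpha19) : ell1) ∈ @closure _ ws (convexHull ℝ C) := by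
      refine mem_closure' ws (f := fun n => ((s/2) • (basisv m + basisv n) : ell1))
        (b := atTop ⊓ 𝓟 S) ?_ ?_
      · apply key
        intro w
        have hwlim : Tendsto (fun n => w.1 n) (atTop ⊓ 𝓟 S)
            (𝓝 (∑' i, (alpha19 : ℕ → ℝ) i * w.1 i)) := by
          rw [hval w]; exact w.2.2.mono_left inf_le_left
        have ht : Tendsto (fun n => (s/2) * (w.1 m + w.1 n)) (atTop ⊓ 𝓟 S)
            (𝓝 ((s/2) * ((∑' i, (basisv m : ℕ → ℝ) i * w.1 i)
              + ∑' i, (alpha19 : ℕ → ℝ) i * w.1 i))) := by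
          rw [pair_basis]
          exact (tendsto_const_nhds.add hwlim).const_mul _
        rw [pair_smul_add (s/2) (basisv m) alpha19 w.1 (summable_basis_pair m w.1)
          (summable_pair alpha19 w.2.1)]
        refine ht.congr fun n => ?_
        rw [pair_smul_add (s/2) (basisv m) (basisv n) w.1 (summable_basis_pair m w.1)
          (summable_basis_pair n w.1), pair_basis, pair_basis]
      · refine Filter.eventually_inf_principal.2 (Filter.Eventually.of_forall fun n hn => ?_)
        have hmem := (convex_convexHull ℝ C) (subset_convexHull ℝ C (hSC m hm))
          (subset_convexHull ℝ C (hSC n hn)) (by norm_num : (0:ℝ) ≤ 1/2)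
          (by norm_num : (0:ℝ) ≤ 1/2) (by norm_num)
        convert hmem using 1
        show (s/2) • (basisv m + basisv n) = _
        rw [smul_add, smul_smul, smul_smul, show (1/2:ℝ) * s = s/2 by ring]
    have h1 := hCsph hz
    rw [Set.mem_setOf_eq, norm_smul, norm_basis_add_alpha, Real.norm_eq_abs, abs_div, hs,
      abs_two] at h1
    have h2 : (0:ℝ) < (1/2:ℝ)^m := by positivity
    -- h1 : 1/2 * (2 - (1/2)^m) = 1
    nlinarith [h1]
  · have hne : ∀ n, basisv n ≠ alpha19 := by
      intro n h
      have h' : (basisv n : ℕ → ℝ) n = (alpha19 : ℕ → ℝ) n := by rw [h]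
      rw [basisv_apply, if_pos rfl] at h'
      rw [show ((alpha19 : ℕ → ℝ) n) = -((1/2:ℝ)^(n+1)) from rfl] at h'
      have hp : (0:ℝ) < (1/2:ℝ)^(n+1) := by positivity
      linarith
    refine mem_closure' ws (f := basisv) (b := atTop) ?_ ?_
    · apply key
      intro w
      rw [hval w]
      exact w.2.2.congr fun n => (pair_basis n w.1).symm
    · exact Filter.Eventually.of_forall fun n => ⟨Set.mem_range_self n, hne n⟩
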